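/- Under the same setting, the bias term can also be bounded using the L1 norm: E_D[(R_tar(f,D) - R(f))²] ≤ (1/n) Var_x[q_tar(x)ᵀL(f(x))] + ℓ² (E_x ‖q_tar(x) - q*(x)‖₁)². -/

import Mathlib

open MeasureTheory ProbabilityTheory

/-- Variance-bias bound for the target-risk estimator, L1 version:
`E_D[(R_tar(f,D) - R(f))²] ≤ (1/n) Var_x[q_tarᵀL] + ℓ² (E_x‖q_tar - q*‖₁)²`. -/
theorem risk_estimate_bound_l1 {Ω α : Type*} [MeasurableSpace Ω] [MeasurableSpace α]
    (P : Measure Ω) [IsProbabilityMeasure P] (μ : Measure α) [IsProbabilityMeasure μ]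
    (n K : ℕ) (hn : 0 < n) (hK : 1 ≤ K)
    (X : Fin n → Ω → α) (hXmeas : ∀ i, Measurable (X i))
    (hiid : iIndepFun X P)
    (hdist : ∀ i, P.map (X i) = μ)
    (ℓ : ℝ) (hℓ : 0 ≤ ℓ)
    (qtar qstar L : α → Fin K → ℝ)
    (hqtar_meas : ∀ k, Measurable fun x => qtar x k)
    (hqstar_meas : ∀ k, Measurable fun x => qstar x k)
    (hL_meas : ∀ k, Measurable fun x => L x k)
    (hqtar_nonneg : ∀ x k, 0 ≤ qtar x k) (hqtar_sum : ∀ x, ∑ k, qtar x k = 1)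
    (hqstar_nonneg : ∀ x k, 0 ≤ qstar x k) (hqstar_sum : ∀ x, ∑ k, qstar x k = 1)
    (hLbound : ∀ x k, L x k ∈ Set.Icc (0 : ℝ) ℓ) :
    ∫ ω, ((n : ℝ)⁻¹ * (∑ i, ∑ k, qtar (X i ω) k * L (X i ω) k)
        - ∫ x, ∑ k, qstar x k * L x k ∂μ) ^ 2 ∂P
      ≤ (n : ℝ)⁻¹ * variance (fun x => ∑ k, qtar x k * L x k) μ
        + ℓ ^ 2 * (∫ x, ∑ k, |qtar x k - qstar x k| ∂μ) ^ 2 := by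
  set g : α → ℝ := fun x => ∑ k, qtar x k * L x k with hg
  set h : α → ℝ := fun x => ∑ k, qstar x k * L x k with hh
  have hg_meas : Measurable g := by
    apply Finset.measurable_sum
    intro k _
    exact (hqtar_meas k).mul (hL_meas k)
  have hh_meas : Measurable h := by
    apply Finset.measurable_sum
    intro k _
    exact (hqstar_meas k).mul (hL_meas k)
  have hg_bd : ∀ x, g x ∈ Set.Icc (0 : ℝ) ℓ := by
    intro x
    constructor
    · exact Finset.sum_nonneg fun k _ =>
        mul_nonneg (hqtar_nonneg x k) (hLbound x k).1
    · calc g x ≤ ∑ k, qtar x k * ℓ := Finset.sum_le_sum fun k _ =>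
            mul_le_mul_of_nonneg_left (hLbound x k).2 (hqtar_nonneg x k)
        _ = ℓ := by rw [← Finset.sum_mul, hqtar_sum x, one_mul]
  have hh_bd : ∀ x, h x ∈ Set.Icc (0 : ℝ) ℓ := by
    intro x
    constructor
    · exact Finset.sum_nonneg fun k _ =>
        mul_nonneg (hqstar_nonneg x k) (hLbound x k).1
    · calc h x ≤ ∑ k, qstar x k * ℓ := Finset.sum_le_sum fun k _ =>
            mul_le_mul_of_nonneg_left (hLbound x k).2 (hqstar_nonneg x k)
        _ = ℓ := by rw [← Finset.sum_mul, hqstar_sum x, one_mul]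
  have hg_memLp : MemLp g 2 μ :=
    memLp_of_bounded (ae_of_all μ hg_bd) hg_meas.aestronglyMeasurable 2
  -- the sampled functions
  set Y : Fin n → Ω → ℝ := fun i ω => g (X i ω) with hY
  have hY_meas : ∀ i, Measurable (Y i) := fun i => hg_meas.comp (hXmeas i)
  have hY_memLp : ∀ i, MemLp (Y i) 2 P := fun i =>
    memLp_of_bounded (ae_of_all P fun ω => hg_bd (X i ω))
      (hY_meas i).aestronglyMeasurable 2
  set m : ℝ := ∫ x, g x ∂μ with hm
  set R : ℝ := ∫ x, h x ∂μ with hR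
  have hEY : ∀ i, ∫ ω, Y i ω ∂P = m := by
    intro i
    rw [hm, ← hdist i, integral_map (hXmeas i).aemeasurable hg_meas.aestronglyMeasurable]
  have hVarY : ∀ i, variance (Y i) P = variance g μ := by
    intro i
    rw [variance_eq_sub (hY_memLp i), variance_eq_sub hg_memLp]
    have h1 : ∫ ω, (Y i ω) ^ 2 ∂P = ∫ x, g x ^ 2 ∂μ := by
      rw [← hdist i, integral_map (hXmeas i).aemeasurable
        (hg_meas.pow_const 2).aestronglyMeasurable]
    have h2 := hEY i
    simp only [Pi.pow_apply] at *
    rw [h1, h2]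
  -- sum and its properties
  set T : Ω → ℝ := ∑ i, Y i with hT
  have hT_memLp : MemLp T 2 P := memLp_finset_sum' _ fun i _ => hY_memLp i
  have hVarT : variance T P = n * variance g μ := by
    rw [hT, IndepFun.variance_sum (fun i _ => hY_memLp i)
      (fun i _ j _ hij => (hiid.indepFun hij).comp hg_meas hg_meas)]
    simp [hVarY]
  have hET : ∫ ω, T ω ∂P = n * m := by
    simp only [hT, Finset.sum_apply]
    rw [integral_finset_sum _ fun i _ => (hY_memLp i).integrable one_le_two]
    simp [hEY, Finset.sum_const, mul_comm]
  -- the estimator S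
  set S : Ω → ℝ := fun ω => (n : ℝ)⁻¹ * T ω with hS
  have hn' : (n : ℝ) ≠ 0 := Nat.cast_ne_zero.mpr hn.ne'
  have hS_memLp : MemLp S 2 P := by
    have := hT_memLp.const_mul ((n : ℝ)⁻¹)
    exact this
  have hES : ∫ ω, S ω ∂P = m := by
    rw [hS]
    simp only
    rw [integral_const_mul, hET]
    field_simp
  have hVarS : variance S P = (n : ℝ)⁻¹ * variance g μ := by
    have : S = ((n : ℝ)⁻¹) • T := by ext ω; simp [hS, smul_eq_mul]
    rw [this, variance_smul, hVarT]
    field_simp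
  -- decomposition
  have hSint : Integrable S P := hS_memLp.integrable one_le_two
  have hdecomp : ∫ ω, (S ω - R) ^ 2 ∂P
      = variance S P + (m - R) ^ 2 := by
    have hexp : ∀ ω, (S ω - R) ^ 2
        = (S ω - m) ^ 2 + (2 * (m - R)) * (S ω - m) + (m - R) ^ 2 := by
      intro ω; ring
    rw [integral_congr_ae (ae_of_all P hexp)]
    have hsq_int : Integrable (fun ω => (S ω - m) ^ 2) P := by
      have := (hS_memLp.sub (memLp_const m)).integrable_sq
      simpa using this
    have hlin_int : Integrable (fun ω => (2 * (m - R)) * (S ω - m)) P :=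
      ((hSint.sub (integrable_const m)).const_mul _)
    have hsum_int : Integrable (fun ω => (S ω - m) ^ 2 + (2 * (m - R)) * (S ω - m)) P := by
      exact hsq_int.add hlin_int
    rw [integral_add hsum_int (integrable_const _),
      integral_add hsq_int hlin_int, integral_const_mul,
      integral_sub hSint (integrable_const m), hES]
    simp only [integral_const, measure_univ, ENNReal.toReal_one, probReal_univ, smul_eq_mul, one_mul]
    have hv : variance S P = ∫ ω, (S ω - m) ^ 2 ∂P := by
      rw [variance_eq_integral hS_memLp.aemeasurable, hES]
    rw [hv]
    ring
  -- bias bound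
  set B : ℝ := ∫ x, ∑ k, |qtar x k - qstar x k| ∂μ with hB
  have hd_meas : Measurable fun x => ∑ k, |qtar x k - qstar x k| := by
    apply Finset.measurable_sum
    intro k _
    exact ((hqtar_meas k).sub (hqstar_meas k)).abs
  have hd_bd : ∀ x, ∑ k, |qtar x k - qstar x k| ∈ Set.Icc (0 : ℝ) 2 := by
    intro x
    constructor
    · exact Finset.sum_nonneg fun k _ => abs_nonneg _
    · calc ∑ k, |qtar x k - qstar x k| ≤ ∑ k, (qtar x k + qstar x k) :=
            Finset.sum_le_sum fun k _ => by
              rw [abs_sub_le_iff]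
              constructor <;> nlinarith [hqtar_nonneg x k, hqstar_nonneg x k]
        _ = 2 := by rw [Finset.sum_add_distrib, hqtar_sum x, hqstar_sum x]; norm_num
  have hd_int : Integrable (fun x => ∑ k, |qtar x k - qstar x k|) μ :=
    (memLp_of_bounded (ae_of_all μ hd_bd) hd_meas.aestronglyMeasurable 1).integrable le_rfl
  have hB_nonneg : 0 ≤ B :=
    integral_nonneg fun x => (hd_bd x).1
  have hgh_ptwise : ∀ x, |g x - h x| ≤ ℓ * ∑ k, |qtar x k - qstar x k| := by
    intro x
    have : g x - h x = ∑ k, (qtar x k - qstar x k) * L x k := by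
      rw [hg, hh, ← Finset.sum_sub_distrib]
      congr 1; ext k; ring
    rw [this]
    calc |∑ k, (qtar x k - qstar x k) * L x k|
        ≤ ∑ k, |(qtar x k - qstar x k) * L x k| := Finset.abs_sum_le_sum_abs _ _
      _ ≤ ∑ k, ℓ * |qtar x k - qstar x k| := by
          apply Finset.sum_le_sum
          intro k _
          rw [abs_mul, mul_comm]
          apply mul_le_mul _ le_rfl (abs_nonneg _) hℓ
          rw [abs_of_nonneg (hLbound x k).1]
          exact (hLbound x k).2
      _ = ℓ * ∑ k, |qtar x k - qstar x k| := by rw [Finset.mul_sum]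
  have hbias : |m - R| ≤ ℓ * B := by
    have hgint : Integrable g μ :=
      hg_memLp.integrable one_le_two
    have hhint : Integrable h μ :=
      (memLp_of_bounded (ae_of_all μ hh_bd) hh_meas.aestronglyMeasurable 2).integrable one_le_two
    have : m - R = ∫ x, (g x - h x) ∂μ := by
      rw [integral_sub hgint hhint]
    rw [this]
    calc |∫ x, (g x - h x) ∂μ| ≤ ∫ x, |g x - h x| ∂μ := by
          simpa using norm_integral_le_integral_norm (fun x => g x - h x)
      _ ≤ ∫ x, ℓ * ∑ k, |qtar x k - qstar x k| ∂μ := by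
          apply integral_mono_of_nonneg (ae_of_all μ fun x => abs_nonneg _)
            (hd_int.const_mul ℓ) (ae_of_all μ hgh_ptwise)
      _ = ℓ * B := by rw [integral_const_mul]
  have hbias_sq : (m - R) ^ 2 ≤ ℓ ^ 2 * B ^ 2 := by
    have h1 : (m - R) ^ 2 = |m - R| ^ 2 := (sq_abs _).symm
    rw [h1, ← mul_pow]
    exact pow_le_pow_left₀ (abs_nonneg _) hbias 2
  calc ∫ ω, ((n : ℝ)⁻¹ * (∑ i, ∑ k, qtar (X i ω) k * L (X i ω) k)
        - ∫ x, ∑ k, qstar x k * L x k ∂μ) ^ 2 ∂P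
      = ∫ ω, (S ω - R) ^ 2 ∂P := by
        apply integral_congr_ae
        apply ae_of_all
        intro ω
        simp only [hS, hT, hY, Finset.sum_apply, hg, hR, hh]
    _ = variance S P + (m - R) ^ 2 := hdecomp
    _ ≤ (n : ℝ)⁻¹ * variance g μ + ℓ ^ 2 * B ^ 2 := by
        rw [hVarS]
        exact add_le_add le_rfl hbias_sq
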